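/- For every real r > 1 there exists a constant C_r > 0 such that for every τ ≥ 0 and all a, b, c : ℤ² → [0,∞]: ∑_{(j,k)∈ℤ²×ℤ²} ‖k‖^{r+1/2} ‖j+k‖^{r+1/2} e^{τ‖j‖} e^{τ‖k‖} e^{τ‖j+k‖} a(j) b(k) c(j+k) ≤ C_r · (a(0) + S_{r,τ}(a)) · S_{r+1/2,τ}(b) · S_{r+1/2,τ}(c). -/

import Mathlib

open scoped ENNReal

noncomputable section

/-- Euclidean norm of a lattice point `k ∈ ℤ²` viewed as a vector in `ℝ²`. -/
def nz (k : ℤ × ℤ) : ℝ := Real.sqrt ((k.1 : ℝ) ^ 2 + (k.2 : ℝ) ^ 2)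

/-- The weighted ℓ²-norm `S_{ρ,τ}(a) = (∑_k ‖k‖^{2ρ} e^{2τ‖k‖} a(k)²)^{1/2}`. -/
def S (ρ τ : ℝ) (a : ℤ × ℤ → ℝ≥0∞) : ℝ≥0∞ :=
  (∑' k : ℤ × ℤ, ENNReal.ofReal (nz k ^ (2 * ρ) * Real.exp (2 * τ * nz k)) * (a k) ^ 2)
    ^ ((1 : ℝ) / 2)

open MeasureTheory in
/-- Cauchy–Schwarz for `ℝ≥0∞`-valued sums. -/
lemma tsum_mul_le_sqrt_mul_sqrt (f g : ℤ × ℤ → ℝ≥0∞) :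
    ∑' k, f k * g k ≤ (∑' k, f k ^ 2) ^ ((1:ℝ)/2) * (∑' k, g k ^ 2) ^ ((1:ℝ)/2) := by
  have hpq : (2:ℝ).HolderConjugate 2 := Real.holderConjugate_iff.mpr ⟨one_lt_two, by norm_num⟩
  have h := ENNReal.lintegral_mul_le_Lp_mul_Lq (Measure.count : Measure (ℤ × ℤ)) hpq
    (measurable_of_countable f).aemeasurable (measurable_of_countable g).aemeasurable
  simp only [Pi.mul_apply, lintegral_count] at h
  have h2 : ∀ x : ℝ≥0∞, x ^ (2:ℝ) = x ^ 2 := fun x => by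
    rw [show ((2:ℝ)) = ((2:ℕ):ℝ) by norm_num, ENNReal.rpow_natCast]
  simpa only [h2] using h

lemma nz_nonneg (k : ℤ × ℤ) : 0 ≤ nz k := Real.sqrt_nonneg _

lemma nz_zero : nz (0 : ℤ × ℤ) = 0 := by simp [nz]

lemma nz_pos {k : ℤ × ℤ} (hk : k ≠ 0) : 0 < nz k := by
  apply Real.sqrt_pos.mpr
  have h : k.1 ≠ 0 ∨ k.2 ≠ 0 := by
    by_contra h
    push_neg at h
    exact hk (Prod.ext h.1 h.2)
  rcases h with h | h
  · have h1 : (0:ℝ) < (k.1:ℝ) ^ 2 := by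
      have : (k.1:ℝ) ≠ 0 := Int.cast_ne_zero.mpr h
      positivity
    nlinarith [sq_nonneg (k.2:ℝ)]
  · have h1 : (0:ℝ) < (k.2:ℝ) ^ 2 := by
      have : (k.2:ℝ) ≠ 0 := Int.cast_ne_zero.mpr h
      positivity
    nlinarith [sq_nonneg (k.1:ℝ)]

/-- Squaring the elementary weight gives the `S`-weight. -/
lemma sq_weight (ρ τ : ℝ) (k : ℤ × ℤ) :
    (ENNReal.ofReal (nz k ^ ρ * Real.exp (τ * nz k))) ^ 2
      = ENNReal.ofReal (nz k ^ (2 * ρ) * Real.exp (2 * τ * nz k)) := by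
  rw [← ENNReal.ofReal_pow (mul_nonneg (Real.rpow_nonneg (nz_nonneg k) _) (Real.exp_nonneg _))]
  congr 1
  rw [mul_pow]
  congr 1
  · rw [← Real.rpow_natCast (nz k ^ ρ) 2, ← Real.rpow_mul (nz_nonneg k)]
    norm_num [mul_comm ρ 2]
  · rw [sq, ← Real.exp_add]
    ring_nf

/-- Summability of the lattice sum `∑ ‖j‖^{-2r}` for `r > 1`. -/
lemma lattice_sum_lt_top {r : ℝ} (hr : 1 < r) :
    (∑' j : ℤ × ℤ, ENNReal.ofReal (nz j ^ (-(2 * r)))) < ⊤ := by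
  have hk : (2:ℝ) < 2 * r := by linarith
  have hsum : Summable fun x : Fin 2 → ℤ => ‖x‖ ^ (-(2 * r)) :=
    EisensteinSeries.summable_one_div_norm_rpow hk
  set e : ℤ × ℤ ≃ (Fin 2 → ℤ) := (finTwoArrowEquiv ℤ).symm with he
  have hsum' : Summable fun j : ℤ × ℤ => ‖e j‖ ^ (-(2 * r)) :=
    e.summable_iff.mpr hsum
  have hle : ∀ j : ℤ × ℤ, ENNReal.ofReal (nz j ^ (-(2 * r)))
      ≤ ENNReal.ofReal (‖e j‖ ^ (-(2 * r))) := by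
    intro j
    by_cases hj : j = 0
    · subst hj
      rw [nz_zero, Real.zero_rpow (ne_of_lt (by linarith : -(2*r) < 0))]
      · simp
    · apply ENNReal.ofReal_le_ofReal
      apply Real.rpow_le_rpow_of_nonpos
      · rw [norm_pos_iff]
        intro h0
        apply hj
        apply e.injective
        rw [h0]
        ext i
        fin_cases i <;> rfl
      · rw [pi_norm_le_iff_of_nonneg (nz_nonneg j)]
        intro i
        have h1 : (|(j.1:ℝ)|) ≤ nz j := by
          rw [← Real.sqrt_sq_eq_abs]; unfold nz
          exact Real.sqrt_le_sqrt (by nlinarith [sq_nonneg (j.2:ℝ)])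
        have h2 : (|(j.2:ℝ)|) ≤ nz j := by
          rw [← Real.sqrt_sq_eq_abs]; unfold nz
          exact Real.sqrt_le_sqrt (by nlinarith [sq_nonneg (j.1:ℝ)])
        fin_cases i
        · exact le_trans (le_of_eq (Int.norm_eq_abs _ ▸ (by push_cast; rfl))) h1
        · exact le_trans (le_of_eq (Int.norm_eq_abs _ ▸ (by push_cast; rfl))) h2
      · linarith
  calc (∑' j : ℤ × ℤ, ENNReal.ofReal (nz j ^ (-(2 * r))))
      ≤ ∑' j : ℤ × ℤ, ENNReal.ofReal (‖e j‖ ^ (-(2 * r))) := ENNReal.tsum_le_tsum hle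
    _ = ENNReal.ofReal (∑' j : ℤ × ℤ, ‖e j‖ ^ (-(2 * r))) := by
        rw [ENNReal.ofReal_tsum_of_nonneg (fun j => Real.rpow_nonneg (norm_nonneg _) _) hsum']
    _ < ⊤ := ENNReal.ofReal_lt_top

theorem trilinear_A4_term :
    ∀ r : ℝ, 1 < r → ∃ C : ℝ, 0 < C ∧ ∀ τ : ℝ, 0 ≤ τ → ∀ a b c : ℤ × ℤ → ℝ≥0∞,
      (∑' p : (ℤ × ℤ) × (ℤ × ℤ),
          ENNReal.ofReal (nz p.2 ^ (r + 1 / 2) * nz (p.1 + p.2) ^ (r + 1 / 2)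
              * Real.exp (τ * nz p.1) * Real.exp (τ * nz p.2)
              * Real.exp (τ * nz (p.1 + p.2)))
            * a p.1 * b p.2 * c (p.1 + p.2))
        ≤ ENNReal.ofReal C * (a 0 + S r τ a) * S (r + 1 / 2) τ b * S (r + 1 / 2) τ c := by
  intro r hr
  set T : ℝ≥0∞ := ∑' j : ℤ × ℤ, ENNReal.ofReal (nz j ^ (-(2 * r))) with hT
  have hTlt : T < ⊤ := lattice_sum_lt_top hr
  set K : ℝ≥0∞ := T ^ ((1:ℝ)/2) with hK
  have hKlt : K < ⊤ := ENNReal.rpow_lt_top_of_nonneg (by norm_num) hTlt.ne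
  refine ⟨K.toReal + 1, by positivity, ?_⟩
  intro τ hτ a b c
  have hC : ENNReal.ofReal (K.toReal + 1) = K + 1 := by
    rw [ENNReal.ofReal_add ENNReal.toReal_nonneg zero_le_one,
      ENNReal.ofReal_toReal hKlt.ne, ENNReal.ofReal_one]
  -- abbreviations
  set E : ℤ × ℤ → ℝ≥0∞ := fun j => ENNReal.ofReal (Real.exp (τ * nz j)) with hE
  set F : ℤ × ℤ → ℝ≥0∞ :=
    fun k => ENNReal.ofReal (nz k ^ (r + 1/2) * Real.exp (τ * nz k)) with hF
  -- pointwise factorization of the weight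
  have key : ∀ p : (ℤ × ℤ) × (ℤ × ℤ),
      ENNReal.ofReal (nz p.2 ^ (r + 1 / 2) * nz (p.1 + p.2) ^ (r + 1 / 2)
              * Real.exp (τ * nz p.1) * Real.exp (τ * nz p.2)
              * Real.exp (τ * nz (p.1 + p.2)))
            * a p.1 * b p.2 * c (p.1 + p.2)
        = (E p.1 * a p.1) * ((F p.2 * b p.2) * (F (p.1 + p.2) * c (p.1 + p.2))) := by
    intro p
    have h1 : 0 ≤ nz p.2 ^ (r + 1/2) * Real.exp (τ * nz p.2) :=
      mul_nonneg (Real.rpow_nonneg (nz_nonneg _) _) (Real.exp_nonneg _)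
    have h2 : 0 ≤ nz (p.1 + p.2) ^ (r + 1/2) * Real.exp (τ * nz (p.1 + p.2)) :=
      mul_nonneg (Real.rpow_nonneg (nz_nonneg _) _) (Real.exp_nonneg _)
    rw [show nz p.2 ^ (r + 1 / 2) * nz (p.1 + p.2) ^ (r + 1 / 2)
              * Real.exp (τ * nz p.1) * Real.exp (τ * nz p.2)
              * Real.exp (τ * nz (p.1 + p.2))
        = (nz p.2 ^ (r + 1/2) * Real.exp (τ * nz p.2))
            * ((nz (p.1 + p.2) ^ (r + 1/2) * Real.exp (τ * nz (p.1 + p.2)))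
              * Real.exp (τ * nz p.1)) by ring,
      ENNReal.ofReal_mul h1, ENNReal.ofReal_mul h2]
    rw [hE, hF]
    ring
  -- the b and c ℓ²-sums
  have hFb : (∑' k : ℤ × ℤ, (F k * b k) ^ 2) ^ ((1:ℝ)/2) = S (r + 1/2) τ b := by
    rw [S]
    congr 1
    refine tsum_congr fun k => ?_
    rw [mul_pow, hF]
    rw [sq_weight (r + 1/2) τ k]
  have hFc : (∑' k : ℤ × ℤ, (F k * c k) ^ 2) ^ ((1:ℝ)/2) = S (r + 1/2) τ c := by
    rw [S]
    congr 1
    refine tsum_congr fun k => ?_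
    rw [mul_pow, hF]
    rw [sq_weight (r + 1/2) τ k]
  -- inner Cauchy–Schwarz, for each j
  have inner_cs : ∀ j : ℤ × ℤ,
      (∑' k : ℤ × ℤ, (F k * b k) * (F (j + k) * c (j + k)))
        ≤ S (r + 1/2) τ b * S (r + 1/2) τ c := by
    intro j
    calc (∑' k : ℤ × ℤ, (F k * b k) * (F (j + k) * c (j + k)))
        ≤ (∑' k : ℤ × ℤ, (F k * b k) ^ 2) ^ ((1:ℝ)/2)
            * (∑' k : ℤ × ℤ, (F (j + k) * c (j + k)) ^ 2) ^ ((1:ℝ)/2) :=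
          tsum_mul_le_sqrt_mul_sqrt _ _
      _ = S (r + 1/2) τ b * S (r + 1/2) τ c := by
          rw [hFb]
          congr 1
          rw [show (∑' k : ℤ × ℤ, (F (j + k) * c (j + k)) ^ 2)
              = ∑' m : ℤ × ℤ, (F m * c m) ^ 2 from
            (Equiv.addLeft j).tsum_eq (fun m => (F m * c m) ^ 2)]
          exact hFc
  -- the a-sum bound
  have ha : (∑' j : ℤ × ℤ, E j * a j) ≤ a 0 + K * S r τ a := by
    classical
    rw [ENNReal.tsum_eq_add_tsum_ite (0 : ℤ × ℤ)]
    have h0 : E 0 * a 0 = a 0 := by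
      rw [hE]; simp [nz_zero]
    rw [h0]
    refine add_le_add_right ?_ _
    have hptwise : ∀ j : ℤ × ℤ, (@ite ℝ≥0∞ (j = 0) (Classical.propDecidable _) 0 (E j * a j))
        ≤ ENNReal.ofReal (nz j ^ (-r))
            * (ENNReal.ofReal (nz j ^ r * Real.exp (τ * nz j)) * a j) := by
      intro j
      by_cases hj : j = 0
      · rw [if_pos hj]
        exact zero_le
      · rw [if_neg hj, ← mul_assoc, ← ENNReal.ofReal_mul (Real.rpow_nonneg (nz_nonneg _) _),
          ← mul_assoc, ← Real.rpow_add (nz_pos hj)]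
        rw [hE]
        simp
    refine le_trans (ENNReal.tsum_le_tsum hptwise) ?_
    refine le_trans (tsum_mul_le_sqrt_mul_sqrt _ _) ?_
    apply le_of_eq
    congr 1
    · rw [hK, hT]
      congr 1
      refine tsum_congr fun j => ?_
      rw [← ENNReal.ofReal_pow (Real.rpow_nonneg (nz_nonneg _) _)]
      congr 1
      rw [← Real.rpow_natCast (nz j ^ (-r)) 2, ← Real.rpow_mul (nz_nonneg j)]
      congr 1
      push_cast
      ring
    · rw [S]
      congr 1
      refine tsum_congr fun j => ?_
      rw [mul_pow, sq_weight r τ j]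
  -- assemble
  calc (∑' p : (ℤ × ℤ) × (ℤ × ℤ),
          ENNReal.ofReal (nz p.2 ^ (r + 1 / 2) * nz (p.1 + p.2) ^ (r + 1 / 2)
              * Real.exp (τ * nz p.1) * Real.exp (τ * nz p.2)
              * Real.exp (τ * nz (p.1 + p.2)))
            * a p.1 * b p.2 * c (p.1 + p.2))
      = ∑' j : ℤ × ℤ, (E j * a j)
          * ∑' k : ℤ × ℤ, (F k * b k) * (F (j + k) * c (j + k)) := by
        rw [ENNReal.tsum_prod']
        refine tsum_congr fun j => ?_
        rw [← ENNReal.tsum_mul_left]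
        exact tsum_congr fun k => key (j, k)
    _ ≤ ∑' j : ℤ × ℤ, (E j * a j) * (S (r + 1/2) τ b * S (r + 1/2) τ c) :=
        ENNReal.tsum_le_tsum fun j => mul_le_mul_right (inner_cs j) _
    _ = (∑' j : ℤ × ℤ, E j * a j) * (S (r + 1/2) τ b * S (r + 1/2) τ c) :=
        ENNReal.tsum_mul_right
    _ ≤ (a 0 + K * S r τ a) * (S (r + 1/2) τ b * S (r + 1/2) τ c) :=
        mul_le_mul_left ha _
    _ ≤ ((K + 1) * (a 0 + S r τ a)) * (S (r + 1/2) τ b * S (r + 1/2) τ c) := by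
        refine mul_le_mul_left ?_ _
        rw [mul_add]
        refine add_le_add ?_ ?_
        · exact le_mul_of_one_le_left zero_le (le_add_self)
        · exact mul_le_mul_left (le_add_right le_rfl) _
    _ = ENNReal.ofReal (K.toReal + 1) * (a 0 + S r τ a) * S (r + 1/2) τ b * S (r + 1/2) τ c := by
        rw [hC]; ring
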